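/- Let Γ = [0,1]^d and let U, V be disjoint nonempty connected subsets of Γ. Define V' as the connected component of Γ \ U containing V and U' := Γ \ V'. Then closure(U') ∩ closure(V') is a connected subset of Γ. -/

import Mathlib

open Set Complex

open Classical in
lemma glue_cont {X Y : Type*} [TopologicalSpace X] [TopologicalSpace Y] {A B : Set X}
    (hA : IsClosed A) (hB : IsClosed B) {f g : X → Y}
    (hf : ContinuousOn f A) (hg : ContinuousOn g B) (heq : Set.EqOn f g (A ∩ B)) :
    ContinuousOn (fun z => if z ∈ A then f z else g z) (A ∪ B) := by
  intro z hz
  rw [continuousWithinAt_union]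
  constructor
  · by_cases hzA : z ∈ A
    · exact ((hf z hzA).congr (fun y hy => if_pos hy) (if_pos hzA))
    · exact continuousWithinAt_of_notMem_closure (by rwa [hA.closure_eq])
  · by_cases hzB : z ∈ B
    · refine (hg z hzB).congr (fun y hy => ?_) ?_
      · by_cases hyA : y ∈ A
        · rw [if_pos hyA]; exact heq ⟨hyA, hy⟩
        · rw [if_neg hyA]
      · by_cases hzA : z ∈ A
        · rw [if_pos hzA]; exact heq ⟨hzA, hzB⟩
        · rw [if_neg hzA]
    · have hzA : z ∈ A := hz.resolve_right hzB
      exact continuousWithinAt_of_notMem_closure (by rwa [hB.closure_eq])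

open Classical in
theorem cube_unicoherent {d : ℕ} {A B : Set (Fin d → ℝ)}
    (hAcl : IsClosed A) (hBcl : IsClosed B)
    (hAc : IsPreconnected A) (hBc : IsPreconnected B)
    (hcover : A ∪ B = Set.Icc (0 : Fin d → ℝ) 1) :
    IsPreconnected (A ∩ B) := by
  set Γ : Set (Fin d → ℝ) := Set.Icc 0 1 with hΓdef
  have hΓcl : IsClosed Γ := isClosed_Icc
  have hΓcpt : IsCompact Γ := isCompact_Icc
  have hAΓ : A ⊆ Γ := hcover ▸ subset_union_left
  have hBΓ : B ⊆ Γ := hcover ▸ subset_union_right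
  by_contra hncon
  rw [isPreconnected_iff_subset_of_fully_disjoint_closed (hAcl.inter hBcl)] at hncon
  push_neg at hncon
  obtain ⟨u, v, hu, hv, hsub, hdisj, hnu, hnv⟩ := hncon
  set P : Set (Fin d → ℝ) := A ∩ B ∩ u with hPdef
  set Q : Set (Fin d → ℝ) := A ∩ B ∩ v with hQdef
  have hPcl : IsClosed P := (hAcl.inter hBcl).inter hu
  have hQcl : IsClosed Q := (hAcl.inter hBcl).inter hv
  have hPQdisj : Disjoint P Q :=
    Disjoint.mono (inter_subset_right) (inter_subset_right) hdisj
  have hPne : P.Nonempty := by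
    obtain ⟨z, hz, hzv⟩ := not_subset.1 hnv
    exact ⟨z, hz, (hsub hz).resolve_right hzv⟩
  have hQne : Q.Nonempty := by
    obtain ⟨z, hz, hzu⟩ := not_subset.1 hnu
    exact ⟨z, hz, (hsub hz).resolve_left hzu⟩
  have hPQ : A ∩ B ⊆ P ∪ Q := fun z hz => (hsub hz).imp (fun h => ⟨hz, h⟩) (fun h => ⟨hz, h⟩)
  obtain ⟨w, hw0, hw1, hw01⟩ := exists_continuous_zero_one_of_isClosed hPcl hQcl hPQdisj
  set f : (Fin d → ℝ) → ℂ :=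
    fun z => if z ∈ A then Complex.exp ((Real.pi * w z : ℝ) * Complex.I)
      else Complex.exp ((-(Real.pi * w z) : ℝ) * Complex.I) with hfdef
  have habs : ∀ z, ‖f z‖ = 1 := by
    intro z
    simp only [hfdef]
    split_ifs <;> exact Complex.norm_exp_ofReal_mul_I _
  have hfne : ∀ z, f z ≠ 0 := by
    intro z h
    have := habs z
    rw [h, norm_zero] at this
    norm_num at this
  -- the two branch formulas agree on A ∩ B
  have hpm : Complex.exp ((Real.pi : ℝ) * Complex.I) =
      Complex.exp ((-(Real.pi : ℝ) : ℝ) * Complex.I) := by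
    rw [Complex.ofReal_neg, neg_mul, Complex.exp_neg, Complex.exp_pi_mul_I]
    norm_num
  have heqAB : ∀ z ∈ A ∩ B,
      Complex.exp ((Real.pi * w z : ℝ) * Complex.I) =
      Complex.exp ((-(Real.pi * w z) : ℝ) * Complex.I) := by
    intro z hz
    rcases hPQ hz with hzP | hzQ
    · have h0 : w z = 0 := hw0 hzP
      rw [h0]; norm_num
    · have h1 : w z = 1 := hw1 hzQ
      rw [h1, mul_one]; exact hpm
  have hfB : ∀ z ∈ B, f z = Complex.exp ((-(Real.pi * w z) : ℝ) * Complex.I) := by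
    intro z hz
    by_cases hzA : z ∈ A
    · simp only [hfdef, if_pos hzA]
      exact heqAB z ⟨hzA, hz⟩
    · simp only [hfdef, if_neg hzA]
  have hfA : ∀ z ∈ A, f z = Complex.exp ((Real.pi * w z : ℝ) * Complex.I) := by
    intro z hz; simp only [hfdef, if_pos hz]
  have hfc : ContinuousOn f Γ := by
    rw [← hcover]
    have h1 : Continuous fun z => Complex.exp ((Real.pi * w z : ℝ) * Complex.I) := by
      fun_prop
    have h2 : Continuous fun z => Complex.exp ((-(Real.pi * w z) : ℝ) * Complex.I) := by
      fun_prop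
    exact glue_cont hAcl hBcl h1.continuousOn h2.continuousOn heqAB
  -- uniform continuity of the straight-line homotopy
  have hsm : ∀ t ∈ Set.Icc (0:ℝ) 1, ∀ x ∈ Γ, t • x ∈ Γ := by
    intro t ht x hx
    constructor <;> intro i <;>
      simp only [Pi.smul_apply, smul_eq_mul, Pi.zero_apply, Pi.one_apply]
    · exact mul_nonneg ht.1 (hx.1 i)
    · exact mul_le_one₀ ht.2 (hx.1 i) (hx.2 i)
  have hGc : ContinuousOn (fun p : ℝ × (Fin d → ℝ) => f (p.1 • p.2))
      ((Set.Icc (0:ℝ) 1) ×ˢ Γ) := by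
    refine hfc.comp (continuous_fst.smul continuous_snd).continuousOn ?_
    exact fun p hp => hsm _ hp.1 _ hp.2
  have hGu := (isCompact_Icc.prod hΓcpt).uniformContinuousOn_of_continuous hGc
  rw [Metric.uniformContinuousOn_iff] at hGu
  obtain ⟨δ, hδpos, hδ⟩ := hGu 1 one_pos
  obtain ⟨n, hn⟩ := exists_nat_one_div_lt hδpos
  set N : ℕ := n + 1 with hNdef
  have hNpos : (0:ℝ) < N := by positivity
  have hstep : ∀ k : ℕ, k < N → ∀ x ∈ Γ,
      dist (f ((((k:ℝ)+1)/N) • x)) (f (((k:ℝ)/N) • x)) < 1 := by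
    intro k hk x hx
    have hk' : (k:ℝ) + 1 ≤ N := by exact_mod_cast hk
    have h1 : ((k:ℝ)/N) ∈ Set.Icc (0:ℝ) 1 :=
      ⟨by positivity, by rw [div_le_one hNpos]; linarith⟩
    have h2 : (((k:ℝ)+1)/N) ∈ Set.Icc (0:ℝ) 1 :=
      ⟨by positivity, by rw [div_le_one hNpos]; linarith⟩
    refine hδ (((k:ℝ)+1)/N, x) ⟨h2, hx⟩ (((k:ℝ)/N), x) ⟨h1, hx⟩ ?_
    rw [Prod.dist_eq]
    simp only [dist_self]
    have : dist (((k:ℝ)+1)/N) ((k:ℝ)/N) = 1/N := by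
      rw [Real.dist_eq]
      rw [show ((k:ℝ)+1)/N - (k:ℝ)/N = 1/N by field_simp; ring]
      rw [abs_of_pos (by positivity)]
    rw [this, max_eq_left (by positivity)]
    have : ((N:ℝ)) = (n:ℝ) + 1 := by rw [hNdef]; push_cast; ring
    rw [this]
    exact hn
  -- the lift, defined by recursion
  set φ : ℕ → (Fin d → ℝ) → ℝ := fun k => Nat.rec (motive := fun _ => (Fin d → ℝ) → ℝ)
    (fun _ => if (0 : Fin d → ℝ) ∈ A then w 0 else -(w 0))
    (fun k ih x => ih x +
      Complex.arg (f ((((k:ℝ)+1)/N) • x) / f (((k:ℝ)/N) • x)) / Real.pi) k with hφdef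
  have hφ0 : ∀ x, φ 0 x = if (0 : Fin d → ℝ) ∈ A then w 0 else -(w 0) := fun _ => rfl
  have hφs : ∀ k x, φ (k+1) x = φ k x +
      Complex.arg (f ((((k:ℝ)+1)/N) • x) / f (((k:ℝ)/N) • x)) / Real.pi := fun _ _ => rfl
  have hzeroΓ : (0 : Fin d → ℝ) ∈ Γ := by
    constructor <;> intro i <;> norm_num
  have key : ∀ k : ℕ, k ≤ N → ContinuousOn (φ k) Γ ∧
      ∀ x ∈ Γ, Complex.exp ((Real.pi * φ k x : ℝ) * Complex.I) = f (((k:ℝ)/N) • x) := by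
    intro k
    induction k with
    | zero =>
      intro _
      constructor
      · exact continuousOn_const
      · intro x hx
        rw [hφ0]
        rw [show ((0:ℕ):ℝ)/N = 0 by norm_num, zero_smul]
        by_cases h0 : (0 : Fin d → ℝ) ∈ A
        · rw [if_pos h0, hfA 0 h0]
        · have h0B : (0 : Fin d → ℝ) ∈ B := by
            have := hcover ▸ hzeroΓ
            exact this.resolve_left h0
          rw [if_neg h0, hfB 0 h0B]
          norm_num
    | succ k ih =>
      intro hk1
      obtain ⟨ihc, ihe⟩ := ih (Nat.le_of_succ_le hk1)
      have hkN : k < N := Nat.lt_of_succ_le hk1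
      have hkN' : (k:ℝ) + 1 ≤ N := by exact_mod_cast hk1
      have h1 : ((k:ℝ)/N) ∈ Set.Icc (0:ℝ) 1 :=
        ⟨by positivity, by rw [div_le_one hNpos]; linarith⟩
      have h2 : (((k:ℝ)+1)/N) ∈ Set.Icc (0:ℝ) 1 :=
        ⟨by positivity, by rw [div_le_one hNpos]; linarith⟩
      have hm1 : ∀ x ∈ Γ, ((k:ℝ)/N) • x ∈ Γ := fun x hx => hsm _ h1 _ hx
      have hm2 : ∀ x ∈ Γ, (((k:ℝ)+1)/N) • x ∈ Γ := fun x hx => hsm _ h2 _ hx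
      set r : (Fin d → ℝ) → ℂ :=
        fun x => f ((((k:ℝ)+1)/N) • x) / f (((k:ℝ)/N) • x) with hrdef
      have hrabs : ∀ x, ‖r x‖ = 1 := by
        intro x
        rw [hrdef]
        simp only [norm_div, habs, div_one]
      have hrne : ∀ x, r x ≠ 0 := by
        intro x h
        have := hrabs x
        rw [h, norm_zero] at this
        norm_num at this
      have hrre : ∀ x ∈ Γ, 0 < (r x).re := by
        intro x hx
        have hd := hstep k hkN x hx
        have h1' : ‖r x - 1‖ < 1 := by
          have hb : ‖f (((k:ℝ)/N) • x)‖ = 1 := habs _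
          have he : r x - 1 =
              (f ((((k:ℝ)+1)/N) • x) - f (((k:ℝ)/N) • x)) / f (((k:ℝ)/N) • x) := by
            rw [hrdef, sub_div, div_self (hfne _)]
          rw [he, norm_div, hb, div_one]
          rwa [Complex.dist_eq] at hd
        have e1 : (r x).re ^ 2 + (r x).im ^ 2 = 1 := by
          have h := Complex.sq_norm (r x)
          rw [hrabs x, Complex.normSq_apply] at h
          nlinarith [h]
        have e2 : ((r x).re - 1) ^ 2 + (r x).im ^ 2 < 1 := by
          have h := Complex.sq_norm (r x - 1)
          rw [Complex.normSq_apply, Complex.sub_re, Complex.sub_im,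
            Complex.one_re, Complex.one_im] at h
          nlinarith [h1', norm_nonneg (r x - 1)]
        nlinarith
      have hrc : ContinuousOn r Γ := by
        refine ContinuousOn.div ?_ ?_ (fun x _ => hfne _)
        · exact hfc.comp (continuous_const_smul _).continuousOn hm2
        · exact hfc.comp (continuous_const_smul _).continuousOn hm1
      constructor
      · have : ContinuousOn (fun x => Complex.arg (r x)) Γ := by
          intro x hx
          exact (Complex.continuousAt_arg
            (Complex.mem_slitPlane_iff.2 (Or.inl (hrre x hx)))).comp_continuousWithinAt
            (hrc x hx)
        exact ihc.add (this.div_const _)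
      · intro x hx
        rw [hφs]
        have harg : Complex.exp ((Complex.arg (r x) : ℝ) * Complex.I) = r x := by
          have h := Complex.norm_mul_exp_arg_mul_I (r x)
          rwa [hrabs x, Complex.ofReal_one, one_mul] at h
        have hπ : Real.pi * (φ k x + Complex.arg (r x) / Real.pi) =
            Real.pi * φ k x + Complex.arg (r x) := by
          field_simp
        rw [hπ, Complex.ofReal_add, add_mul, Complex.exp_add, ihe x hx, harg, hrdef]
        rw [mul_comm, div_mul_cancel₀ _ (hfne _)]
        congr 2
        push_cast
        ring
  obtain ⟨hφc, hφe⟩ := key N le_rfl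
  have hφΓ : ∀ x ∈ Γ, Complex.exp ((Real.pi * φ N x : ℝ) * Complex.I) = f x := by
    intro x hx
    have h := hφe x hx
    rwa [div_self (ne_of_gt hNpos), one_smul] at h
  -- a continuous function with values in 2ℤ is constant on a preconnected set
  have hconst : ∀ (S : Set (Fin d → ℝ)), IsPreconnected S → ∀ g : (Fin d → ℝ) → ℝ,
      ContinuousOn g S → (∀ z ∈ S, ∃ m : ℤ, g z = 2 * m) →
      ∀ z₁ ∈ S, ∀ z₂ ∈ S, g z₁ = g z₂ := by
    intro S hS g hg hint z₁ h₁ z₂ h₂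
    have main : ∀ y₁ ∈ S, ∀ y₂ ∈ S, ¬ (g y₁ < g y₂) := by
      intro y₁ hy₁ y₂ hy₂ hlt
      obtain ⟨m₁, hm₁⟩ := hint y₁ hy₁
      obtain ⟨m₂, hm₂⟩ := hint y₂ hy₂
      have hm12 : m₁ < m₂ := by
        rw [hm₁, hm₂] at hlt
        exact_mod_cast (by linarith : (m₁:ℝ) < m₂)
      have hmem : (2 * (m₁:ℝ) + 1) ∈ Set.Icc (g y₁) (g y₂) := by
        constructor
        · rw [hm₁]; linarith
        · rw [hm₂]
          have : (m₁:ℝ) + 1 ≤ m₂ := by exact_mod_cast hm12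
          linarith
      have himg := (hS.image g hg).Icc_subset ⟨y₁, hy₁, rfl⟩ ⟨y₂, hy₂, rfl⟩ hmem
      obtain ⟨z₃, hz₃, hgz₃⟩ := himg
      obtain ⟨m₃, hm₃⟩ := hint z₃ hz₃
      rw [hm₃] at hgz₃
      have : (2 * m₃ : ℤ) = 2 * m₁ + 1 := by exact_mod_cast hgz₃
      omega
    rcases lt_trichotomy (g z₁) (g z₂) with h | h | h
    · exact absurd h (main z₁ h₁ z₂ h₂)
    · exact h
    · exact absurd h (main z₂ h₂ z₁ h₁)
  -- on A, φ N - w is constant in 2ℤ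
  have hval : ∀ z ∈ Γ, ∀ (s : ℝ), Complex.exp ((s : ℝ) * Complex.I) = f z →
      Complex.exp ((Real.pi * φ N z : ℝ) * Complex.I) = Complex.exp ((s:ℝ) * Complex.I) →
      ∃ m : ℤ, Real.pi * φ N z = s + m * (2 * Real.pi) := by
    intro z _ s _ hexp
    rw [Complex.exp_eq_exp_iff_exists_int] at hexp
    obtain ⟨m, hm⟩ := hexp
    refine ⟨m, ?_⟩
    have h2 : ((Real.pi * φ N z : ℝ) : ℂ) = ((s + m * (2 * Real.pi) : ℝ) : ℂ) := by
      apply mul_right_cancel₀ Complex.I_ne_zero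
      rw [hm]
      push_cast
      ring
    exact_mod_cast h2
  have hA2 : ∀ z ∈ A, ∃ m : ℤ, φ N z - w z = 2 * m := by
    intro z hz
    have hzΓ := hAΓ hz
    have h1 := hφΓ z hzΓ
    rw [hfA z hz] at h1
    obtain ⟨m, hm⟩ := hval z hzΓ _ (hfA z hz).symm h1
    refine ⟨m, ?_⟩
    have hπ := Real.pi_ne_zero
    have : Real.pi * (φ N z - w z) = Real.pi * (2 * m) := by push_cast at hm ⊢; linarith
    exact mul_left_cancel₀ hπ this
  have hB2 : ∀ z ∈ B, ∃ m : ℤ, φ N z + w z = 2 * m := by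
    intro z hz
    have hzΓ := hBΓ hz
    have h1 := hφΓ z hzΓ
    rw [hfB z hz] at h1
    obtain ⟨m, hm⟩ := hval z hzΓ _ (hfB z hz).symm h1
    refine ⟨m, ?_⟩
    have hπ := Real.pi_ne_zero
    have : Real.pi * (φ N z + w z) = Real.pi * (2 * m) := by push_cast at hm ⊢; linarith
    exact mul_left_cancel₀ hπ this
  obtain ⟨p, hp⟩ := hPne
  obtain ⟨q, hq⟩ := hQne
  have hpA : p ∈ A := hp.1.1
  have hpB : p ∈ B := hp.1.2
  have hqA : q ∈ A := hq.1.1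
  have hqB : q ∈ B := hq.1.2
  have hwp : w p = 0 := hw0 hp
  have hwq : w q = 1 := hw1 hq
  have hgA : ContinuousOn (fun z => φ N z - w z) A :=
    (hφc.mono hAΓ).sub w.continuous.continuousOn
  have hgB : ContinuousOn (fun z => φ N z + w z) B :=
    (hφc.mono hBΓ).add w.continuous.continuousOn
  have hcA := hconst A hAc _ hgA hA2 p hpA q hqA
  have hcB := hconst B hBc _ hgB hB2 p hpB q hqB
  simp only [hwp, hwq] at hcA hcB
  linarith

-- complement of a connected component of Γ \ U is preconnected
theorem compl_component_preconnected {d : ℕ} {U : Set (Fin d → ℝ)}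
    (hUΓ : U ⊆ Set.Icc (0 : Fin d → ℝ) 1) (hUc : IsConnected U)
    {x : Fin d → ℝ} (hx : x ∈ Set.Icc (0 : Fin d → ℝ) 1 \ U) :
    IsPreconnected (Set.Icc (0 : Fin d → ℝ) 1 \
      connectedComponentIn (Set.Icc (0 : Fin d → ℝ) 1 \ U) x) := by
  set Γ : Set (Fin d → ℝ) := Set.Icc 0 1 with hΓdef
  have hΓcl : IsClosed Γ := isClosed_Icc
  have hΓconv : Convex ℝ Γ := convex_Icc _ _
  have hΓc : IsPreconnected Γ := hΓconv.isPreconnected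
  set W : Set (Fin d → ℝ) := Γ \ U with hWdef
  set Vc : Set (Fin d → ℝ) := connectedComponentIn W x with hVc
  have hVcW : Vc ⊆ W := connectedComponentIn_subset _ _
  obtain ⟨u₀, hu₀⟩ := hUc.nonempty
  -- key: for any component D of W other than Vc, U ∪ D is preconnected
  have hkey : ∀ y ∈ W, y ∉ Vc → IsPreconnected (U ∪ connectedComponentIn W y) := by
    intro y hyW hyVc
    set D : Set (Fin d → ℝ) := connectedComponentIn W y with hD
    have hyD : y ∈ D := mem_connectedComponentIn hyW
    have hDW : D ⊆ W := connectedComponentIn_subset _ _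
    have hDc : IsPreconnected D := isPreconnected_connectedComponentIn
    have hUD : Disjoint U D := Set.disjoint_left.2 fun z hzU hzD => (hDW hzD).2 hzU
    have htouch : (closure U ∩ D).Nonempty ∨ (closure D ∩ U).Nonempty := by
      by_contra hcon
      rw [not_or, not_nonempty_iff_eq_empty, not_nonempty_iff_eq_empty] at hcon
      obtain ⟨h1, h2⟩ := hcon
      -- D is closed
      have hDΓ : D ⊆ Γ := fun z hz => (hDW hz).1
      have hclD : closure D ⊆ W := by
        intro z hz
        have hzΓ : z ∈ Γ := hΓcl.closure_subset_iff.2 hDΓ hz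
        refine ⟨hzΓ, fun hzU => ?_⟩
        have : z ∈ closure D ∩ U := ⟨hz, hzU⟩
        rw [h2] at this
        exact this
      have hDcl : IsClosed D := by
        have : closure D ⊆ D :=
          (isPreconnected_connectedComponentIn.closure).subset_connectedComponentIn
            (subset_closure hyD) hclD
        exact isClosed_of_closure_subset this
      -- D is relatively open in Γ
      have hDopen : ∀ z ∈ D, ∃ ε > 0, Γ ∩ Metric.ball z ε ⊆ D := by
        intro z hz
        have hzncl : z ∉ closure U := by
          intro hcl
          have : z ∈ closure U ∩ D := ⟨hcl, hz⟩
          rw [h1] at this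
          exact this
        obtain ⟨ε, hε, hball⟩ := Metric.isOpen_iff.1 isClosed_closure.isOpen_compl z hzncl
        refine ⟨ε, hε, ?_⟩
        have hNW : Γ ∩ Metric.ball z ε ⊆ W := by
          intro a ha
          exact ⟨ha.1, fun haU => hball ha.2 (subset_closure haU)⟩
        have hNc : IsPreconnected (Γ ∩ Metric.ball z ε) :=
          (hΓconv.inter (convex_ball z ε)).isPreconnected
        have hzN : z ∈ Γ ∩ Metric.ball z ε :=
          ⟨(hDW hz).1, Metric.mem_ball_self hε⟩
        have := hNc.subset_connectedComponentIn hzN hNW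
        rwa [← connectedComponentIn_eq hz] at this
      -- Γ \ D is closed
      have hcompl_cl : IsClosed (Γ \ D) := by
        apply isClosed_of_closure_subset
        intro z hz
        have hzΓ : z ∈ Γ := hΓcl.closure_subset_iff.2 diff_subset hz
        refine ⟨hzΓ, fun hzD => ?_⟩
        obtain ⟨ε, hε, hsub⟩ := hDopen z hzD
        obtain ⟨b, hbD, hbd⟩ := Metric.mem_closure_iff.1 hz ε hε
        exact hbD.2 (hsub ⟨hbD.1, by rwa [Metric.mem_ball, dist_comm]⟩)
      -- contradiction with connectedness of Γ
      have := (isPreconnected_iff_subset_of_fully_disjoint_closed hΓcl).1 hΓc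
        D (Γ \ D) hDcl hcompl_cl
        (fun z hz => by by_cases h : z ∈ D; exacts [Or.inl h, Or.inr ⟨hz, h⟩])
        (Set.disjoint_left.2 fun z hz hz' => hz'.2 hz)
      rcases this with h | h
      · exact (Set.disjoint_left.1 hUD hu₀ (h (hUΓ hu₀))).elim
      · exact (h (hDW hyD).1).2 hyD
    rcases htouch with ⟨z, hzU, hzD⟩ | ⟨z, hzD, hzU⟩
    · have h1 : IsPreconnected (insert z U) :=
        hUc.isPreconnected.subset_closure (subset_insert _ _)
          (insert_subset hzU subset_closure)
      have h2 : IsPreconnected (insert z U ∪ D) :=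
        IsPreconnected.union' ⟨z, mem_insert _ _, hzD⟩ h1 hDc
      have : insert z U ∪ D = U ∪ D := by
        rw [Set.insert_union]
        exact Set.insert_eq_self.2 (Or.inr hzD)
      rwa [this] at h2
    · have h1 : IsPreconnected (insert z D) :=
        hDc.subset_closure (subset_insert _ _) (insert_subset hzD subset_closure)
      have h2 : IsPreconnected (U ∪ insert z D) :=
        IsPreconnected.union' ⟨z, hzU, mem_insert _ _⟩ hUc.isPreconnected h1
      have : U ∪ insert z D = U ∪ D := by
        rw [Set.union_insert]
        exact Set.insert_eq_self.2 (Or.inl hzU)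
      rwa [this] at h2
  -- now express Γ \ Vc as a union
  have hUVc : Disjoint U Vc := Set.disjoint_left.2 fun z hzU hzVc => (hVcW hzVc).2 hzU
  set c : Set (Set (Fin d → ℝ)) :=
    insert U {s | ∃ y ∈ W \ Vc, s = U ∪ connectedComponentIn W y} with hc
  have hcU : ⋃₀ c = Γ \ Vc := by
    apply Set.Subset.antisymm
    · rintro z ⟨s, hs, hzs⟩
      rcases hs with rfl | ⟨y, hy, rfl⟩
      · exact ⟨hUΓ hzs, fun h => Set.disjoint_left.1 hUVc hzs h⟩
      · rcases hzs with hzU | hzD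
        · exact ⟨hUΓ hzU, fun h => Set.disjoint_left.1 hUVc hzU h⟩
        · have hzW := connectedComponentIn_subset W y hzD
          refine ⟨hzW.1, fun hzVc => ?_⟩
          refine hy.2 ?_
          have h1 : connectedComponentIn W y = connectedComponentIn W z :=
            connectedComponentIn_eq hzD
          have h2 : connectedComponentIn W x = connectedComponentIn W z :=
            connectedComponentIn_eq hzVc
          rw [hVc, h2, ← h1]
          exact mem_connectedComponentIn hy.1
    · intro z hz
      by_cases hzU : z ∈ U
      · exact ⟨U, mem_insert _ _, hzU⟩
      · have hzW : z ∈ W := ⟨hz.1, hzU⟩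
        refine ⟨U ∪ connectedComponentIn W z,
          Or.inr ⟨z, ⟨hzW, hz.2⟩, rfl⟩, Or.inr (mem_connectedComponentIn hzW)⟩
  rw [← hcU]
  apply isPreconnected_sUnion u₀
  · rintro s (rfl | ⟨y, hy, rfl⟩)
    · exact hu₀
    · exact Or.inl hu₀
  · rintro s (rfl | ⟨y, hy, rfl⟩)
    · exact hUc.isPreconnected
    · exact hkey y hy.1 hy.2

/-- Unicoherence of the cube: for disjoint nonempty connected `U, V ⊆ Γ = [0,1]^d`,
the exterior boundary `closure(U') ∩ closure(V')` of `U` relative to `V` is connected,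
where `V'` is the connected component of `Γ \ U` containing `V` and `U' = Γ \ V'`. -/
theorem exterior_boundary_connected (d : ℕ) (U V : Set (Fin d → ℝ))
    (hUΓ : U ⊆ Set.Icc (0 : Fin d → ℝ) 1) (hVΓ : V ⊆ Set.Icc (0 : Fin d → ℝ) 1)
    (hdisj : Disjoint U V) (hUc : IsConnected U) (hVc : IsConnected V)
    (x : Fin d → ℝ) (hx : x ∈ V) :
    IsConnected
      (closure (Set.Icc (0 : Fin d → ℝ) 1 \
          connectedComponentIn (Set.Icc (0 : Fin d → ℝ) 1 \ U) x) ∩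
        closure (connectedComponentIn (Set.Icc (0 : Fin d → ℝ) 1 \ U) x)) := by
  have hxW : x ∈ Set.Icc (0 : Fin d → ℝ) 1 \ U :=
    ⟨hVΓ hx, fun h => Set.disjoint_left.1 hdisj h hx⟩
  set Γ : Set (Fin d → ℝ) := Set.Icc 0 1 with hΓdef
  set Vc : Set (Fin d → ℝ) := connectedComponentIn (Γ \ U) x with hVcdef
  have hVcW : Vc ⊆ Γ \ U := connectedComponentIn_subset _ _
  set A : Set (Fin d → ℝ) := closure (Γ \ Vc) with hAdef
  set B : Set (Fin d → ℝ) := closure Vc with hBdef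
  have hAcl : IsClosed A := isClosed_closure
  have hBcl : IsClosed B := isClosed_closure
  have hAc : IsPreconnected A := (compl_component_preconnected hUΓ hUc hxW).closure
  have hBc : IsPreconnected B :=
    (isPreconnected_connectedComponentIn (x := x) (F := Γ \ U)).closure
  have hAΓ : A ⊆ Γ := closure_minimal diff_subset isClosed_Icc
  have hBΓ : B ⊆ Γ := closure_minimal (hVcW.trans diff_subset) isClosed_Icc
  have hcover : A ∪ B = Γ := by
    apply Set.Subset.antisymm (Set.union_subset hAΓ hBΓ)
    intro z hz
    by_cases hzVc : z ∈ Vc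
    · exact Or.inr (subset_closure hzVc)
    · exact Or.inl (subset_closure ⟨hz, hzVc⟩)
  have hmain : IsPreconnected (A ∩ B) := cube_unicoherent hAcl hBcl hAc hBc hcover
  have hne : (A ∩ B).Nonempty := by
    by_contra h
    rw [Set.not_nonempty_iff_eq_empty] at h
    have hdisjAB : Disjoint A B := Set.disjoint_iff_inter_eq_empty.2 h
    have hΓAB : Γ ⊆ A ∪ B := hcover.symm.subset
    rcases (isPreconnected_iff_subset_of_fully_disjoint_closed isClosed_Icc).1
        (convex_Icc (0 : Fin d → ℝ) 1).isPreconnected A B hAcl hBcl hΓAB hdisjAB with h' | h'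
    · have hxB : x ∈ B := subset_closure (mem_connectedComponentIn hxW)
      have hxA : x ∈ A := h' (hBΓ hxB)
      have : x ∈ A ∩ B := ⟨hxA, hxB⟩
      rw [h] at this
      exact this
    · obtain ⟨u₀, hu₀⟩ := hUc.nonempty
      have huA : u₀ ∈ A :=
        subset_closure ⟨hUΓ hu₀, fun hc => (hVcW hc).2 hu₀⟩
      have huB : u₀ ∈ B := h' (hAΓ huA)
      have : u₀ ∈ A ∩ B := ⟨huA, huB⟩
      rw [h] at this
      exact this
  exact ⟨hne, hmain⟩
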